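/- The relaxed stochastic order is transitive on sets of symmetric distributions with continuous quantile functions; in fact, for symmetric distributions F and G with continuous quantile functions, F ≥_rS G holds if and only if the medians satisfy F^{-1}(1/2) ≥ G^{-1}(1/2). -/

import Mathlib

/-- `F ≥_rS G`: the relaxed stochastic order in terms of quantile functions. -/
def RelaxedStochOrder (qF qG : ℝ → ℝ) : Prop :=
  ∀ τ : ℝ, 1 / 2 < τ → τ < 1 →
    0 ≤ max (qF τ - qG τ) (qF (1 - τ) - qG (1 - τ))

lemma relaxed_of_median (qF qG : ℝ → ℝ)
    (hFsym : ∀ τ ∈ Set.Ioo (0:ℝ) 1, qF τ = 2 * qF (1 / 2) - qF (1 - τ))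
    (hGsym : ∀ τ ∈ Set.Ioo (0:ℝ) 1, qG τ = 2 * qG (1 / 2) - qG (1 - τ))
    (hmed : qG (1 / 2) ≤ qF (1 / 2)) : RelaxedStochOrder qF qG := by
  intro τ h1 h2
  have hτ : τ ∈ Set.Ioo (0:ℝ) 1 := ⟨by linarith, h2⟩
  have hF := hFsym τ hτ
  have hG := hGsym τ hτ
  rcases le_total (qF τ - qG τ) (qF (1 - τ) - qG (1 - τ)) with h | h
  · rw [max_eq_right h]; linarith
  · rw [max_eq_left h]; linarith

lemma median_of_relaxed (qF qG : ℝ → ℝ)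
    (hFc : ContinuousOn qF (Set.Ioo 0 1)) (hGc : ContinuousOn qG (Set.Ioo 0 1))
    (h : RelaxedStochOrder qF qG) : qG (1 / 2) ≤ qF (1 / 2) := by
  set f : ℝ → ℝ := fun τ => max (qF τ - qG τ) (qF (1 - τ) - qG (1 - τ)) with hf
  have hhalf : (1/2 : ℝ) ∈ Set.Ioo (0:ℝ) 1 := by norm_num
  have hmap : Set.MapsTo (fun τ : ℝ => 1 - τ) (Set.Ioo 0 1) (Set.Ioo 0 1) := by
    intro x hx
    simp only [Set.mem_Ioo] at hx ⊢
    constructor <;> linarith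
  have hsub : ContinuousWithinAt (fun τ : ℝ => 1 - τ) (Set.Ioo 0 1) (1/2) :=
    (continuous_const.sub continuous_id).continuousWithinAt
  have hF2 : ContinuousWithinAt (fun τ : ℝ => qF (1 - τ)) (Set.Ioo 0 1) (1/2) := by
    have := (hFc ((1:ℝ) - 1/2) (by norm_num)).comp hsub hmap
    simpa [Function.comp_def] using this
  have hG2 : ContinuousWithinAt (fun τ : ℝ => qG (1 - τ)) (Set.Ioo 0 1) (1/2) := by
    have := (hGc ((1:ℝ) - 1/2) (by norm_num)).comp hsub hmap
    simpa [Function.comp_def] using this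
  have hfc : ContinuousWithinAt f (Set.Ioo 0 1) (1/2) :=
    ((hFc _ hhalf).sub (hGc _ hhalf)).max (hF2.sub hG2)
  have hfc' : ContinuousWithinAt f (Set.Ioo (1/2) 1) (1/2) :=
    hfc.mono (fun x hx => ⟨by linarith [hx.1], hx.2⟩)
  have hne : (nhdsWithin (1/2 : ℝ) (Set.Ioo (1/2) 1)).NeBot := by
    apply mem_closure_iff_nhdsWithin_neBot.mp
    rw [closure_Ioo (by norm_num : (1/2 : ℝ) ≠ 1)]
    constructor <;> norm_num
  have hev : ∀ᶠ τ in nhdsWithin (1/2 : ℝ) (Set.Ioo (1/2) 1), 0 ≤ f τ := by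
    filter_upwards [self_mem_nhdsWithin] with τ hτ
    exact h τ hτ.1 hτ.2
  have hle : 0 ≤ f (1/2) := ge_of_tendsto hfc' hev
  have : f (1/2) = qF (1/2) - qG (1/2) := by
    simp [hf]
    norm_num
  linarith [this ▸ hle]

/-- On symmetric distributions with continuous quantile functions, the relaxed
stochastic order is transitive; in fact `F ≥_rS G` iff the medians satisfy
`F⁻¹(1/2) ≥ G⁻¹(1/2)`. -/
theorem relaxed_stochastic_symmetric (qF qG qH : ℝ → ℝ)
    (hF : MonotoneOn qF (Set.Ioo 0 1)) (hG : MonotoneOn qG (Set.Ioo 0 1))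
    (hH : MonotoneOn qH (Set.Ioo 0 1))
    (hFc : ContinuousOn qF (Set.Ioo 0 1)) (hGc : ContinuousOn qG (Set.Ioo 0 1))
    (hHc : ContinuousOn qH (Set.Ioo 0 1))
    (hFsym : ∀ τ ∈ Set.Ioo (0:ℝ) 1, qF τ = 2 * qF (1 / 2) - qF (1 - τ))
    (hGsym : ∀ τ ∈ Set.Ioo (0:ℝ) 1, qG τ = 2 * qG (1 / 2) - qG (1 - τ))
    (hHsym : ∀ τ ∈ Set.Ioo (0:ℝ) 1, qH τ = 2 * qH (1 / 2) - qH (1 - τ)) :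
    (RelaxedStochOrder qF qG → RelaxedStochOrder qG qH →
      RelaxedStochOrder qF qH) ∧
    (RelaxedStochOrder qF qG ↔ qG (1 / 2) ≤ qF (1 / 2)) := by
  constructor
  · intro hFG hGH
    exact relaxed_of_median qF qH hFsym hHsym
      (le_trans (median_of_relaxed qG qH hGc hHc hGH)
        (median_of_relaxed qF qG hFc hGc hFG))
  · exact ⟨median_of_relaxed qF qG hFc hGc, relaxed_of_median qF qG hFsym hGsym⟩
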